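/- arXiv:2007.07348 — 2 statements merged into one kernel-verified Lean document; each statement's English description precedes it below -/
import Mathlib

section
/- For any finite connected graph G with n vertices, maximum degree Δ and minimum degree δ, the Kirchhoff index and Kemeny constant satisfy (n/Δ)·K ≤ R(G) ≤ (n/δ)·K. -/
open Finset Matrix Polynomial

/-- The transition matrix of the simple random walk on a graph:
`P i j = 1/deg(i)` if `i ~ j`, and `0` otherwise. -/
noncomputable def transMatrix {V : Type*} [Fintype V] (G : SimpleGraph V)
    [DecidableRel G.Adj] : Matrix V V ℝ :=
  fun i j => if G.Adj i j then (1 : ℝ) / (G.degree i) else 0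

/-- The stationary distribution of the simple random walk: `π i = deg(i) / (2|E|)`. -/
noncomputable def stationary {V : Type*} [Fintype V] [DecidableEq V] (G : SimpleGraph V)
    [DecidableRel G.Adj] : V → ℝ :=
  fun i => (G.degree i : ℝ) / (2 * G.edgeFinset.card)

/-- `H` is the table of expected hitting times of the simple random walk on `G`:
`H a b = E_a T_b`.  It is characterized by `H b b = 0` and the one-step
(first-step analysis) equations `H a b = 1 + ∑_j P a j * H j b` for `a ≠ b`. -/
def IsHittingTime {V : Type*} [Fintype V] (G : SimpleGraph V) [DecidableRel G.Adj]
    (H : V → V → ℝ) : Prop :=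
  (∀ b, H b b = 0) ∧ ∀ a b, a ≠ b → H a b = 1 + ∑ j, transMatrix G a j * H j b

/-- `R` is the table of effective resistances of `G` (unit resistor on each edge):
`R a b = v a - v b` where `v` is a potential for a unit current flow from `a` to `b`,
i.e. `L v = 1_a - 1_b` for the graph Laplacian `L`. -/
def IsEffectiveResistance {V : Type*} [Fintype V] [DecidableEq V] (G : SimpleGraph V)
    [DecidableRel G.Adj] (R : V → V → ℝ) : Prop :=
  ∀ a b, ∃ v : V → ℝ,
    G.lapMatrix ℝ *ᵥ v =
      (fun x => (if x = a then (1 : ℝ) else 0) - (if x = b then (1 : ℝ) else 0)) ∧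
    R a b = v a - v b

lemma deg_pos_aux {V : Type*} [Fintype V] [Nontrivial V] (G : SimpleGraph V)
    [DecidableRel G.Adj] (hconn : G.Connected) (a : V) : 0 < G.degree a := by
  obtain ⟨w, hw⟩ := exists_ne a
  obtain ⟨p⟩ := hconn a w
  rw [SimpleGraph.degree_pos_iff_exists_adj]
  cases p with
  | nil => exact absurd rfl hw.symm
  | cons h _ => exact ⟨_, h⟩

lemma trans_rowsum_aux {V : Type*} [Fintype V] (G : SimpleGraph V)
    [DecidableRel G.Adj] (a : V) (h : 0 < G.degree a) :
    ∑ j, transMatrix G a j = 1 := by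
  have hd : (G.degree a : ℝ) ≠ 0 := by positivity
  simp only [transMatrix]
  rw [← Finset.sum_filter]
  rw [Finset.sum_const]
  have : (Finset.univ.filter (G.Adj a)) = G.neighborFinset a := by
    ext x; simp [SimpleGraph.mem_neighborFinset]
  rw [this, SimpleGraph.card_neighborFinset_eq_degree, nsmul_eq_mul,
    mul_one_div, div_self hd]

/-- Hitting times are nonnegative. -/
lemma hitting_nonneg {V : Type*} [Fintype V] [Nontrivial V] (G : SimpleGraph V)
    [DecidableRel G.Adj] (hconn : G.Connected) (H : V → V → ℝ)
    (hH : IsHittingTime G H) (a b : V) : 0 ≤ H a b := by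
  by_contra hneg
  push_neg at hneg
  obtain ⟨a₀, -, hmin⟩ := Finset.exists_min_image Finset.univ (fun x => H x b)
    ⟨a, Finset.mem_univ a⟩
  have hmin' : ∀ x, H a₀ b ≤ H x b := fun x => hmin x (Finset.mem_univ x)
  have h0 : H a₀ b < 0 := lt_of_le_of_lt (hmin' a) hneg
  have hab : a₀ ≠ b := by
    intro h; rw [h, hH.1 b] at h0; exact lt_irrefl _ h0
  have heq := hH.2 a₀ b hab
  have hsum : ∑ j, transMatrix G a₀ j * H j b ≥ ∑ j, transMatrix G a₀ j * H a₀ b := by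
    apply Finset.sum_le_sum
    intro j _
    apply mul_le_mul_of_nonneg_left (hmin' j)
    unfold transMatrix
    positivity
  rw [← Finset.sum_mul, trans_rowsum_aux G a₀ (deg_pos_aux G hconn a₀), one_mul] at hsum
  linarith [heq]

/-- Laplacian applied to a column of hitting times. -/
lemma lap_hitting {V : Type*} [Fintype V] [DecidableEq V] [Nontrivial V] (G : SimpleGraph V)
    [DecidableRel G.Adj] (hconn : G.Connected) (H : V → V → ℝ)
    (hH : IsHittingTime G H) (b : V) :
    G.lapMatrix ℝ *ᵥ (fun x => H x b) =
      fun x => (G.degree x : ℝ) - if x = b then (2 * G.edgeFinset.card : ℝ) else 0 := by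
  have key : ∀ a : V, a ≠ b →
      (G.lapMatrix ℝ *ᵥ (fun x => H x b)) a = (G.degree a : ℝ) := by
    intro a hab
    rw [SimpleGraph.lapMatrix_mulVec_apply]
    have hd : (0 : ℝ) < G.degree a := by
      exact_mod_cast deg_pos_aux G hconn a
    have heq := hH.2 a b hab
    have : (G.degree a : ℝ) * H a b =
        (G.degree a : ℝ) + ∑ j, (G.degree a : ℝ) * (transMatrix G a j * H j b) := by
      rw [heq, mul_add, mul_one, Finset.mul_sum]
    rw [this]
    have hterm : ∀ j : V, (G.degree a : ℝ) * (transMatrix G a j * H j b) =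
        if G.Adj a j then H j b else 0 := by
      intro j
      unfold transMatrix
      split_ifs with h
      · field_simp
      · ring
    simp_rw [hterm]
    rw [← Finset.sum_filter]
    have : (Finset.univ.filter (G.Adj a)) = G.neighborFinset a := by
      ext x; simp [SimpleGraph.mem_neighborFinset]
    rw [this]
    ring
  -- total sum of (L *ᵥ f) is zero
  have hcolsum : ∀ j : V, ∑ a : V, G.lapMatrix ℝ a j = 0 := by
    intro j
    have hrow := congrFun (SimpleGraph.lapMatrix_mulVec_const_eq_zero G (R := ℝ)) j
    rw [Matrix.mulVec, dotProduct] at hrow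
    simp only [mul_one] at hrow
    calc ∑ a : V, G.lapMatrix ℝ a j = ∑ a : V, G.lapMatrix ℝ j a := by
          refine Finset.sum_congr rfl fun a _ => ?_
          exact ((SimpleGraph.isSymm_lapMatrix ℝ G : (G.lapMatrix ℝ).IsSymm).apply a j).symm
      _ = 0 := hrow
  have htot : ∑ a : V, (G.lapMatrix ℝ *ᵥ (fun x => H x b)) a = 0 := by
    have e : ∀ a : V, (G.lapMatrix ℝ *ᵥ (fun x => H x b)) a
        = ∑ j : V, G.lapMatrix ℝ a j * H j b := fun a => rfl
    simp_rw [e]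
    rw [Finset.sum_comm]
    refine Finset.sum_eq_zero fun j _ => ?_
    rw [← Finset.sum_mul, hcolsum j, zero_mul]
  have hatb : (G.lapMatrix ℝ *ᵥ (fun x => H x b)) b
      = (G.degree b : ℝ) - (2 * G.edgeFinset.card : ℝ) := by
    have h1 := Finset.add_sum_erase Finset.univ
      (fun a => (G.lapMatrix ℝ *ᵥ (fun x => H x b)) a) (Finset.mem_univ b)
    rw [htot] at h1
    have h2 : ∑ a ∈ Finset.univ.erase b, (G.lapMatrix ℝ *ᵥ (fun x => H x b)) a
        = ∑ a ∈ Finset.univ.erase b, (G.degree a : ℝ) := by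
      refine Finset.sum_congr rfl fun a ha => ?_
      exact key a (Finset.ne_of_mem_erase ha)
    have hdegsum : ∑ a : V, (G.degree a : ℝ) = (2 * G.edgeFinset.card : ℝ) := by
      have := G.sum_degrees_eq_twice_card_edges
      exact_mod_cast congrArg (Nat.cast : ℕ → ℝ) this
    have h3 := Finset.add_sum_erase Finset.univ
      (fun a => (G.degree a : ℝ)) (Finset.mem_univ b)
    rw [hdegsum] at h3
    rw [h2] at h1
    linarith [h1, h3]
  funext x
  by_cases hx : x = b
  · rw [hx, hatb, if_pos rfl]
  · rw [key x hx, if_neg hx, sub_zero]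

/-- Connectivity: kernel of Laplacian is constants. -/
lemma lap_ker_const {V : Type*} [Fintype V] [DecidableEq V] (G : SimpleGraph V)
    [DecidableRel G.Adj] (hconn : G.Connected) (x : V → ℝ)
    (hx : G.lapMatrix ℝ *ᵥ x = 0) (a b : V) : x a = x b := by
  have := (G.lapMatrix_mulVec_eq_zero_iff_forall_reachable (x := x)).mp (by
    exact hx)
  exact this a b (hconn a b)

/-- The commute time identity. -/
lemma commute_identity {V : Type*} [Fintype V] [DecidableEq V] [Nontrivial V]
    (G : SimpleGraph V) [DecidableRel G.Adj] (hconn : G.Connected)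
    (H : V → V → ℝ) (hH : IsHittingTime G H)
    (R : V → V → ℝ) (hR : IsEffectiveResistance G R) (a b : V) :
    (2 * G.edgeFinset.card : ℝ) * R a b = H a b + H b a := by
  by_cases hab : a = b
  · subst hab
    obtain ⟨v, -, hv2⟩ := hR a a
    rw [hv2, sub_self, mul_zero, hH.1 a, add_zero]
  · obtain ⟨v, hv1, hv2⟩ := hR a b
    set M : ℝ := (2 * G.edgeFinset.card : ℝ) with hM
    set u : V → ℝ := fun x => M * v x - (H x b - H x a) with hu
    have hLu : G.lapMatrix ℝ *ᵥ u = 0 := by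
      have h1 := lap_hitting G hconn H hH b
      have h2 := lap_hitting G hconn H hH a
      funext x
      have e0 : u = (M • v) - ((fun x => H x b) - (fun x => H x a)) := by
        funext y; simp [hu, mul_comm]
      rw [e0, Matrix.mulVec_sub, Matrix.mulVec_sub, Matrix.mulVec_smul, hv1, h1, h2]
      simp only [Pi.sub_apply, Pi.smul_apply, Pi.zero_apply, smul_eq_mul]
      by_cases hx1 : x = a <;> by_cases hx2 : x = b <;>
        simp [hx1, hx2, hab] <;> ring_nf <;> simp_all <;> ring
    have huconst := lap_ker_const G hconn u hLu a b
    have : M * v a - (H a b - H a a) = M * v b - (H b b - H b a) := huconst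
    rw [hH.1 a, hH.1 b] at this
    rw [hv2]
    ring_nf
    ring_nf at this
    linarith [this]

/-- For any finite connected graph with `n` vertices, maximum degree `Δ` and minimum
degree `δ`, the Kirchhoff index `R(G) = ∑_{i<j} R_{ij}` and Kemeny constant `K`
satisfy `(n/Δ)·K ≤ R(G) ≤ (n/δ)·K`. -/
theorem kirchhoff_kemeny_bounds {V : Type*} [Fintype V] [DecidableEq V]
    (G : SimpleGraph V) [DecidableRel G.Adj] (hconn : G.Connected)
    (H : V → V → ℝ) (hH : IsHittingTime G H)
    (R : V → V → ℝ) (hR : IsEffectiveResistance G R)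
    (K : ℝ) (hK : ∀ i, ∑ j, stationary G j * H i j = K) :
    (Fintype.card V : ℝ) / G.maxDegree * K ≤ (∑ i, ∑ j, R i j) / 2 ∧
      (∑ i, ∑ j, R i j) / 2 ≤ (Fintype.card V : ℝ) / G.minDegree * K := by
  have : Nonempty V := hconn.nonempty
  rcases subsingleton_or_nontrivial V with hsub | hnt
  · -- trivial graph on one vertex
    have hR0 : ∀ i j : V, R i j = 0 := by
      intro i j
      obtain ⟨v, -, hv2⟩ := hR i j
      rw [hv2, Subsingleton.elim i j, sub_self]
    have hK0 : K = 0 := by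
      obtain ⟨i⟩ := ‹Nonempty V›
      have := hK i
      have hdeg : ∀ j : V, G.degree j = 0 := by
        intro j
        rw [← Nat.le_zero]
        by_contra h
        push_neg at h
        obtain ⟨w, hw⟩ := (G.degree_pos_iff_exists_adj j).mp h
        exact G.irrefl (Subsingleton.elim w j ▸ hw)
      simp only [stationary, hdeg] at this
      simpa using this.symm
    simp only [hR0, hK0, Finset.sum_const_zero, mul_zero]
    norm_num
  · -- the main case
    set M : ℝ := (2 * G.edgeFinset.card : ℝ) with hM
    have hdegpos : ∀ a : V, 0 < G.degree a := deg_pos_aux G hconn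
    have hMpos : 0 < M := by
      obtain ⟨a⟩ := ‹Nonempty V›
      have h1 : 0 < ∑ v : V, G.degree v :=
        Finset.sum_pos (fun v _ => hdegpos v) ⟨a, Finset.mem_univ a⟩
      rw [G.sum_degrees_eq_twice_card_edges] at h1
      rw [hM]
      exact_mod_cast h1
    set T : ℝ := ∑ i : V, ∑ j : V, H i j with hT
    have hHnn : ∀ i j : V, 0 ≤ H i j := hitting_nonneg G hconn H hH
    have hTnn : 0 ≤ T := Finset.sum_nonneg fun i _ =>
      Finset.sum_nonneg fun j _ => hHnn i j
    -- sum of R in terms of T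
    have hM0 : M ≠ 0 := ne_of_gt hMpos
    have hRsum : (∑ i, ∑ j, R i j) / 2 = T / M := by
      have hsym : (∑ i : V, ∑ j : V, H j i) = T := by
        rw [hT]; exact Finset.sum_comm
      have h1 : M * (∑ i : V, ∑ j : V, R i j) = 2 * T := by
        calc M * (∑ i : V, ∑ j : V, R i j) = ∑ i : V, ∑ j : V, (H i j + H j i) := by
              rw [Finset.mul_sum]
              refine Finset.sum_congr rfl fun i _ => ?_
              rw [Finset.mul_sum]
              exact Finset.sum_congr rfl fun j _ =>
                commute_identity G hconn H hH R hR i j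
          _ = (∑ i : V, ∑ j : V, H i j) + (∑ i : V, ∑ j : V, H j i) := by
              simp_rw [Finset.sum_add_distrib]
          _ = 2 * T := by rw [hsym, ← hT]; ring
      field_simp
      linarith [h1]
    -- n * K in terms of degree-weighted sum
    have hnK : (Fintype.card V : ℝ) * K * M = ∑ i : V, ∑ j : V, (G.degree j : ℝ) * H i j := by
      have : ∀ i : V, K * M = ∑ j : V, (G.degree j : ℝ) * H i j := by
        intro i
        rw [← hK i, Finset.sum_mul]
        refine Finset.sum_congr rfl fun j _ => ?_
        have hst : stationary G j = (G.degree j : ℝ) / M := by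
          simp only [stationary, hM]
        rw [hst, div_mul_eq_mul_div, div_mul_eq_mul_div, mul_div_assoc,
          div_self hM0, mul_one]
      calc (Fintype.card V : ℝ) * K * M = ∑ _i : V, K * M := by
            rw [Finset.sum_const, Finset.card_univ, nsmul_eq_mul]; ring
        _ = ∑ i : V, ∑ j : V, (G.degree j : ℝ) * H i j :=
            Finset.sum_congr rfl fun i _ => this i
    have hlow : (G.minDegree : ℝ) * T ≤ ∑ i : V, ∑ j : V, (G.degree j : ℝ) * H i j := by
      rw [hT, Finset.mul_sum]
      refine Finset.sum_le_sum fun i _ => ?_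
      rw [Finset.mul_sum]
      refine Finset.sum_le_sum fun j _ => ?_
      have : (G.minDegree : ℝ) ≤ (G.degree j : ℝ) := by
        exact_mod_cast G.minDegree_le_degree j
      exact mul_le_mul_of_nonneg_right this (hHnn i j)
    have hhigh : ∑ i : V, ∑ j : V, (G.degree j : ℝ) * H i j ≤ (G.maxDegree : ℝ) * T := by
      rw [hT, Finset.mul_sum]
      refine Finset.sum_le_sum fun i _ => ?_
      rw [Finset.mul_sum]
      refine Finset.sum_le_sum fun j _ => ?_
      have : (G.degree j : ℝ) ≤ (G.maxDegree : ℝ) := by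
        exact_mod_cast G.degree_le_maxDegree j
      exact mul_le_mul_of_nonneg_right this (hHnn i j)
    have hmindeg : (0 : ℝ) < G.minDegree := by
      obtain ⟨a⟩ := ‹Nonempty V›
      have := hdegpos a
      have h2 : 0 < G.minDegree := by
        obtain ⟨v, hv⟩ := G.exists_minimal_degree_vertex
        rw [hv]; exact hdegpos v
      exact_mod_cast h2
    have hmaxdeg : (0 : ℝ) < G.maxDegree := by
      obtain ⟨a⟩ := ‹Nonempty V›
      have h2 : 0 < G.maxDegree := lt_of_lt_of_le (hdegpos a) (G.degree_le_maxDegree a)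
      exact_mod_cast h2
    constructor
    · rw [hRsum, div_mul_eq_mul_div, div_le_div_iff₀ hmaxdeg hMpos]
      calc (Fintype.card V : ℝ) * K * M ≤ (G.maxDegree : ℝ) * T := hnK ▸ hhigh
        _ = T * (G.maxDegree : ℝ) := by ring
    · rw [hRsum, div_mul_eq_mul_div, div_le_div_iff₀ hMpos hmindeg]
      calc T * (G.minDegree : ℝ) = (G.minDegree : ℝ) * T := by ring
        _ ≤ (Fintype.card V : ℝ) * K * M := hnK ▸ hlow
end

section
/- A highly symmetric graph cannot have a resistance-regular cut-vertex. -/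
open Finset Matrix Polynomial

section Aux
variable {V : Type*} [Fintype V] [DecidableEq V] {G : SimpleGraph V} [DecidableRel G.Adj]

lemma sum_trans (x : V) (f : V → ℝ) :
    ∑ j, transMatrix G x j * f j = (∑ j ∈ G.neighborFinset x, f j) / (G.degree x : ℝ) := by
  rw [G.neighborFinset_eq_filter, Finset.sum_filter, Finset.sum_div]
  simp only [transMatrix, ite_mul, zero_mul, one_div, inv_mul_eq_div, ite_div, zero_div]

lemma trans_row_sum (x : V) (hd : 0 < G.degree x) :
    ∑ j, transMatrix G x j = 1 := by
  have := sum_trans (G := G) x (fun _ => (1 : ℝ))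
  simp only [mul_one] at this
  rw [this, Finset.sum_const, SimpleGraph.card_neighborFinset_eq_degree]
  have : (G.degree x : ℝ) ≠ 0 := Nat.cast_ne_zero.mpr hd.ne'
  simp [div_eq_one_iff_eq this]

lemma hit_eq' {H : V → V → ℝ} (hH : IsHittingTime G H) (hdeg : ∀ v, 0 < G.degree v)
    {a b : V} (hab : a ≠ b) :
    (G.degree a : ℝ) * H a b = (G.degree a : ℝ) + ∑ j ∈ G.neighborFinset a, H j b := by
  have h := hH.2 a b hab
  rw [sum_trans] at h
  have hd : (G.degree a : ℝ) ≠ 0 := Nat.cast_ne_zero.mpr (hdeg a).ne'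
  field_simp at h
  linarith [h]

lemma hit_nonneg {H : V → V → ℝ} (hH : IsHittingTime G H) (hdeg : ∀ v, 0 < G.degree v)
    (t x : V) : 0 ≤ H x t := by
  obtain ⟨x₀, -, hmin⟩ := Finset.exists_min_image Finset.univ (fun z => H z t)
    ⟨t, Finset.mem_univ t⟩
  by_cases hx₀ : x₀ = t
  · have := hmin x (Finset.mem_univ x)
    rw [hx₀, hH.1] at this
    exact this
  · exfalso
    have h := hH.2 x₀ t hx₀
    rw [sum_trans] at h
    have hd : (0:ℝ) < (G.degree x₀ : ℝ) := Nat.cast_pos.mpr (hdeg x₀)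
    have hsum : (G.degree x₀ : ℝ) * H x₀ t ≤ ∑ j ∈ G.neighborFinset x₀, H j t := by
      rw [← SimpleGraph.card_neighborFinset_eq_degree, ← nsmul_eq_mul]
      rw [← Finset.sum_const]
      exact Finset.sum_le_sum fun j _ => hmin j (Finset.mem_univ j)
    have : H x₀ t ≤ (∑ j ∈ G.neighborFinset x₀, H j t) / (G.degree x₀ : ℝ) :=
      (le_div_iff₀ hd).mpr (by linarith [hsum])
    linarith
end Aux
section Aux2
set_option linter.unusedSectionVars false
variable {V : Type*} [Fintype V] [DecidableEq V] {G : SimpleGraph V} [DecidableRel G.Adj]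

lemma harmonic_nonpos (hconn : G.Connected) (hdeg : ∀ v, 0 < G.degree v)
    (C : Set V) (i : V) (hiC : i ∉ C)
    (hclosed : ∀ x ∈ C, ∀ y, G.Adj x y → y = i ∨ y ∈ C)
    (w : V → ℝ) (hwi : w i = 0)
    (hharm : ∀ x ∈ C, w x = ∑ j, transMatrix G x j * w j) :
    ∀ x ∈ C, w x ≤ 0 := by
  classical
  set F : Finset V := Finset.univ.filter (fun z => z = i ∨ z ∈ C) with hF
  have hmemF : ∀ z, (z = i ∨ z ∈ C) → z ∈ F := by
    intro z hz; simp [hF, hz]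
  obtain ⟨x₀, hx₀F, hmax⟩ := Finset.exists_max_image F w ⟨i, hmemF i (Or.inl rfl)⟩
  set M := w x₀ with hM
  -- local propagation
  have claim_local : ∀ x ∈ C, w x = M → ∀ y, G.Adj x y → w y = M := by
    intro x hxC hwx y hxy
    have h := hharm x hxC
    rw [sum_trans] at h
    have hd : (0:ℝ) < (G.degree x : ℝ) := Nat.cast_pos.mpr (hdeg x)
    have hsum : ∑ j ∈ G.neighborFinset x, (M - w j) = 0 := by
      rw [Finset.sum_sub_distrib, Finset.sum_const,
        SimpleGraph.card_neighborFinset_eq_degree, nsmul_eq_mul]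
      have : ∑ j ∈ G.neighborFinset x, w j = (G.degree x : ℝ) * w x := by
        field_simp at h; linarith [h]
      rw [this, hwx]; ring
    have hnn : ∀ j ∈ G.neighborFinset x, 0 ≤ M - w j := by
      intro j hj
      have hjC : j = i ∨ j ∈ C := hclosed x hxC j ((SimpleGraph.mem_neighborFinset G x j).mp hj)
      have := hmax j (hmemF j hjC)
      linarith
    have := (Finset.sum_eq_zero_iff_of_nonneg hnn).mp hsum y
      ((SimpleGraph.mem_neighborFinset G x y).mpr hxy)
    linarith
  -- global propagation along reachability
  have key : ∀ z, Relation.ReflTransGen G.Adj z i → (z = i ∨ z ∈ C) → w z = M → w i = M := by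
    intro z hr
    induction hr using Relation.ReflTransGen.head_induction_on with
    | refl => intro _ h; exact h
    | head hac hcb ih =>
      rename_i a c
      intro ha hwa
      rcases ha with rfl | haC
      · exact hwa
      · exact ih (hclosed a haC c hac) (claim_local a haC hwa c hac)
  have hx₀ : x₀ = i ∨ x₀ ∈ C := by
    have := hx₀F; simp [hF] at this; exact this
  have hr : Relation.ReflTransGen G.Adj x₀ i := by
    rw [← SimpleGraph.reachable_iff_reflTransGen]
    exact hconn.preconnected x₀ i
  have hwiM : w i = M := key x₀ hr hx₀ rfl
  intro x hx
  have := hmax x (hmemF x (Or.inr hx))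
  linarith [hwiM, hwi, this]

lemma cut_formula {H : V → V → ℝ} (hH : IsHittingTime G H)
    (hconn : G.Connected) (hdeg : ∀ v, 0 < G.degree v)
    (C : Set V) (i t : V) (hiC : i ∉ C) (htC : t ∉ C)
    (hclosed : ∀ x ∈ C, ∀ y, G.Adj x y → y = i ∨ y ∈ C) :
    ∀ x ∈ C, H x t = H x i + H i t := by
  set w : V → ℝ := fun x => H x t - H x i - H i t with hw
  have hwi : w i = 0 := by simp [hw, hH.1]
  have hharm : ∀ x ∈ C, w x = ∑ j, transMatrix G x j * w j := by
    intro x hxC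
    have hxt : x ≠ t := fun h => htC (h ▸ hxC)
    have hxi : x ≠ i := fun h => hiC (h ▸ hxC)
    have h1 := hH.2 x t hxt
    have h2 := hH.2 x i hxi
    have hrow := trans_row_sum (G := G) x (hdeg x)
    show H x t - H x i - H i t = _
    simp only [hw, mul_sub, Finset.sum_sub_distrib]
    rw [h1, h2, ← Finset.sum_mul, hrow]
    ring
  have hle := harmonic_nonpos hconn hdeg C i hiC hclosed w hwi hharm
  have hge := harmonic_nonpos hconn hdeg C i hiC hclosed (fun x => -(w x)) (by simp [hwi])
    (by intro x hx
        simp only [mul_neg, Finset.sum_neg_distrib, neg_inj]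
        exact hharm x hx)
  intro x hx
  have h1 : H x t - H x i - H i t ≤ 0 := hle x hx
  have h2 : -(H x t - H x i - H i t) ≤ 0 := hge x hx
  linarith
end Aux2
section Aux3
set_option linter.unusedSectionVars false
variable {V : Type*} [Fintype V] [DecidableEq V] {G : SimpleGraph V} [DecidableRel G.Adj]

lemma double_count (f : V → ℝ) :
    ∑ x, ∑ j ∈ G.neighborFinset x, f j = ∑ j, (G.degree j : ℝ) * f j := by
  simp_rw [SimpleGraph.neighborFinset_eq_filter, Finset.sum_filter]
  rw [Finset.sum_comm]
  refine Finset.sum_congr rfl fun j _ => ?_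
  rw [← Finset.sum_filter]
  have hfil : Finset.univ.filter (fun x => G.Adj x j) = G.neighborFinset j := by
    ext x; simp [SimpleGraph.adj_comm]
  rw [hfil, Finset.sum_const, SimpleGraph.card_neighborFinset_eq_degree, nsmul_eq_mul]

lemma return_identity {H : V → V → ℝ} (hH : IsHittingTime G H)
    (hdeg : ∀ v, 0 < G.degree v) (t : V) :
    ∑ j ∈ G.neighborFinset t, H j t = 2 * (G.edgeFinset.card : ℝ) - (G.degree t : ℝ) := by
  classical
  have hsum : ∑ x ∈ Finset.univ.filter (· ≠ t), ((G.degree x : ℝ) * H x t)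
      = ∑ x ∈ Finset.univ.filter (· ≠ t), ((G.degree x : ℝ) + ∑ j ∈ G.neighborFinset x, H j t) := by
    refine Finset.sum_congr rfl fun x hx => ?_
    rw [hit_eq' hH hdeg (Finset.mem_filter.mp hx).2]
  -- extend sums to univ
  have e1 : ∑ x ∈ Finset.univ.filter (· ≠ t), ((G.degree x : ℝ) * H x t)
      = ∑ x, (G.degree x : ℝ) * H x t := by
    rw [← Finset.sum_filter_add_sum_filter_not Finset.univ (· ≠ t) (fun x => (G.degree x : ℝ) * H x t)]
    have : ∑ x ∈ Finset.univ.filter (fun x => ¬ x ≠ t), (G.degree x : ℝ) * H x t = 0 := by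
      refine Finset.sum_eq_zero fun x hx => ?_
      have : x = t := by simpa using (Finset.mem_filter.mp hx).2
      rw [this, hH.1, mul_zero]
    rw [this, add_zero]
  have e2 : ∑ x ∈ Finset.univ.filter (· ≠ t), ∑ j ∈ G.neighborFinset x, H j t
      = (∑ x, ∑ j ∈ G.neighborFinset x, H j t) - ∑ j ∈ G.neighborFinset t, H j t := by
    rw [← Finset.sum_filter_add_sum_filter_not Finset.univ (· ≠ t)
      (fun x => ∑ j ∈ G.neighborFinset x, H j t)]
    have : ∑ x ∈ Finset.univ.filter (fun x => ¬ x ≠ t), ∑ j ∈ G.neighborFinset x, H j t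
        = ∑ j ∈ G.neighborFinset t, H j t := by
      have ht : Finset.univ.filter (fun x => ¬ x ≠ t) = {t} := by
        ext x; simp
      rw [ht, Finset.sum_singleton]
    rw [this]; ring
  have e3 : ∑ x ∈ Finset.univ.filter (· ≠ t), (G.degree x : ℝ)
      = 2 * (G.edgeFinset.card : ℝ) - (G.degree t : ℝ) := by
    have h := Finset.sum_filter_add_sum_filter_not Finset.univ (· ≠ t) (fun x => (G.degree x : ℝ))
    have ht : Finset.univ.filter (fun x => ¬ x ≠ t) = {t} := by ext x; simp
    rw [ht, Finset.sum_singleton] at h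
    have htot : ∑ x, (G.degree x : ℝ) = 2 * (G.edgeFinset.card : ℝ) := by
      have h2 : ((∑ v, G.degree v : ℕ) : ℝ) = ((2 * G.edgeFinset.card : ℕ) : ℝ) := by
        exact_mod_cast congrArg (fun n : ℕ => (n : ℝ)) G.sum_degrees_eq_twice_card_edges
      push_cast at h2
      convert h2 using 1
    linarith [h, htot]
  rw [Finset.sum_add_distrib, e1, e2, e3, double_count] at hsum
  linarith [hsum]

lemma commute_id {H : V → V → ℝ} (hH : IsHittingTime G H)
    (hconn : G.Connected) (hdeg : ∀ v, 0 < G.degree v)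
    {a b : V} (hab : a ≠ b) (v : V → ℝ)
    (hv : G.lapMatrix ℝ *ᵥ v =
      (fun x => (if x = a then (1:ℝ) else 0) - (if x = b then (1:ℝ) else 0))) :
    H a b + H b a = 2 * (G.edgeFinset.card : ℝ) * (v a - v b) := by
  classical
  set m : ℝ := (G.edgeFinset.card : ℝ) with hm
  set w : V → ℝ := fun x => H x b - H x a - (2*m) * v x with hw
  have lapH : ∀ (c x : V), (G.lapMatrix ℝ *ᵥ (fun z => H z c)) x
      = if x = c then (G.degree c : ℝ) - 2*m else (G.degree x : ℝ) := by
    intro c x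
    rw [SimpleGraph.lapMatrix_mulVec_apply]
    by_cases hxc : x = c
    · subst hxc
      rw [if_pos rfl, hH.1, mul_zero, return_identity hH hdeg]
      ring
    · rw [if_neg hxc]
      have := hit_eq' hH hdeg hxc
      linarith [this]
  have hlapw : G.lapMatrix ℝ *ᵥ w = 0 := by
    funext x
    have hsplit : (G.lapMatrix ℝ *ᵥ w) x
        = (G.lapMatrix ℝ *ᵥ (fun z => H z b)) x - (G.lapMatrix ℝ *ᵥ (fun z => H z a)) x
          - (2*m) * (G.lapMatrix ℝ *ᵥ v) x := by
      simp only [Matrix.mulVec, dotProduct, hw]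
      rw [Finset.mul_sum]
      simp only [mul_sub, mul_left_comm]
      rw [Finset.sum_sub_distrib, Finset.sum_sub_distrib]
    rw [hsplit, lapH b x, lapH a x, hv]
    by_cases hxa : x = a
    · subst hxa
      rw [if_neg hab, if_pos rfl]
      simp [hab]
    · by_cases hxb : x = b
      · subst hxb
        rw [if_pos rfl, if_neg (fun h => hab h.symm)]
        simp [hxa]
      · rw [if_neg hxb, if_neg hxa]
        simp [hxa, hxb]
  have hconst : w a = w b := by
    have h0 : Matrix.toLin' (G.lapMatrix ℝ) w = 0 := by
      rw [Matrix.toLin'_apply, hlapw]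
    exact (G.lapMatrix_mulVec_eq_zero_iff_forall_reachable (x := w)).mp hlapw a b
      (hconn.preconnected a b)
  simp only [hw] at hconst
  rw [hH.1, hH.1] at hconst
  linarith [hconst]
end Aux3

/-- A highly symmetric graph cannot have a resistance-regular cut-vertex: if `G`
is highly symmetric and `i` is resistance regular, then deleting `i` does not
disconnect `G`. -/
theorem HS_no_resistance_regular_cut_vertex {V : Type*} [Fintype V] [DecidableEq V]
    (G : SimpleGraph V) [DecidableRel G.Adj] (hconn : G.Connected)
    (H : V → V → ℝ) (hH : IsHittingTime G H) (hHS : ∀ a b, H a b = H b a)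
    (R : V → V → ℝ) (hR : IsEffectiveResistance G R)
    (i : V) (hrr : ∀ j k, G.Adj i j → G.Adj i k → R i j = R i k) :
    (G.induce ({i}ᶜ : Set V)).Preconnected := by
  classical
  by_contra hpre
  simp only [SimpleGraph.Preconnected] at hpre
  push_neg at hpre
  obtain ⟨x, y, hxy⟩ := hpre
  have hxne : (x : V) ≠ i := Set.mem_compl_singleton_iff.mp x.2
  -- every vertex has positive degree
  have hdeg : ∀ v, 0 < G.degree v := by
    intro v
    rw [SimpleGraph.degree_pos_iff_exists_adj]
    by_cases h : v = i
    · obtain ⟨p⟩ := hconn.preconnected v (x : V)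
      cases p with
      | nil => exact absurd h.symm hxne.symm
      | cons hadj q => exact ⟨_, hadj⟩
    · obtain ⟨p⟩ := hconn.preconnected v i
      cases p with
      | nil => exact absurd rfl h
      | cons hadj q => exact ⟨_, hadj⟩
  -- the two sides of the cut
  set A : Set V := {z | ∃ h : z ∈ ({i}ᶜ : Set V),
    (G.induce ({i}ᶜ : Set V)).Reachable x ⟨z, h⟩} with hA
  set B : Set V := {z | z ≠ i ∧ z ∉ A} with hB
  have hiA : i ∉ A := by rintro ⟨h, -⟩; exact h rfl
  have hiB : i ∉ B := fun h => h.1 rfl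
  have hxA : (x : V) ∈ A := ⟨x.2, SimpleGraph.Reachable.refl _⟩
  have hyB : (y : V) ∈ B := by
    refine ⟨Set.mem_compl_singleton_iff.mp y.2, ?_⟩
    rintro ⟨h, hr⟩
    exact hxy hr
  have hclosedA : ∀ z ∈ A, ∀ w, G.Adj z w → w = i ∨ w ∈ A := by
    intro z hz w hadj
    by_cases hwi : w = i
    · exact Or.inl hwi
    · right
      obtain ⟨hz', hr⟩ := hz
      refine ⟨Set.mem_compl_singleton_iff.mpr hwi, hr.trans (SimpleGraph.Adj.reachable ?_)⟩
      exact hadj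
  have hclosedB : ∀ z ∈ B, ∀ w, G.Adj z w → w = i ∨ w ∈ B := by
    intro z hz w hadj
    by_cases hwi : w = i
    · exact Or.inl hwi
    · right
      refine ⟨hwi, fun hwA => ?_⟩
      rcases hclosedA w hwA z hadj.symm with rfl | hzA
      · exact hz.1 rfl
      · exact hz.2 hzA
  -- each side contains a neighbor of i
  have exists_nbr : ∀ (C : Set V), (∀ z ∈ C, ∀ w, G.Adj z w → w = i ∨ w ∈ C) → i ∉ C →
      ∀ z, z ∈ C → ∃ j, G.Adj i j ∧ j ∈ C := by
    intro C hcl hiC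
    have key : ∀ z, Relation.ReflTransGen G.Adj z i → z ∈ C → ∃ j, G.Adj i j ∧ j ∈ C := by
      intro z hr
      induction hr using Relation.ReflTransGen.head_induction_on with
      | refl => intro h; exact absurd h hiC
      | head hac hcb ih =>
        rename_i a c
        intro haC
        rcases hcl a haC c hac with rfl | hcC
        · exact ⟨a, hac.symm, haC⟩
        · exact ih hcC
    intro z hz
    refine key z ?_ hz
    rw [← SimpleGraph.reachable_iff_reflTransGen]
    exact hconn.preconnected z i
  obtain ⟨a0, ha0adj, ha0A⟩ := exists_nbr A hclosedA hiA (x : V) hxA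
  obtain ⟨b0, hb0adj, hb0B⟩ := exists_nbr B hclosedB hiB (y : V) hyB
  -- all neighbors of i have the same hitting time to i
  have hm : ∀ j, G.Adj i j → H j i = H b0 i := by
    intro j hj
    obtain ⟨vj, hvj, hRj⟩ := hR i j
    obtain ⟨vb, hvb, hRb⟩ := hR i b0
    have h1 := commute_id hH hconn hdeg (G.ne_of_adj hj) vj hvj
    have h2 := commute_id hH hconn hdeg (G.ne_of_adj hb0adj) vb hvb
    rw [← hRj] at h1
    rw [← hRb] at h2
    rw [hrr j b0 hj hb0adj] at h1
    have hsym1 : H i j = H j i := hHS i j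
    have hsym2 : H i b0 = H b0 i := hHS i b0
    linarith [h1, h2, hsym1, hsym2]
  -- cut formulas
  have hcutA : ∀ z ∈ A, H z b0 = H z i + H i b0 :=
    cut_formula hH hconn hdeg A i b0 hiA hb0B.2 hclosedA
  have hcutB : ∀ z ∈ B, H z a0 = H z i + H i a0 :=
    cut_formula hH hconn hdeg B i a0 hiB (fun h => h.2 ha0A) hclosedB
  -- split the neighborhood of i
  set NA := (G.neighborFinset i).filter (· ∈ A) with hNA
  set NB := (G.neighborFinset i).filter (fun j => ¬ j ∈ A) with hNB
  have hcard : NA.card + NB.card = G.degree i := by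
    rw [hNA, hNB, Finset.card_filter_add_card_filter_not]
    exact G.card_neighborFinset_eq_degree i
  set c : ℝ := H b0 i with hc
  have hHib0 : H i b0 = c := by rw [hHS i b0]
  have hHia0 : H i a0 = c := by rw [hHS i a0]; exact hm a0 ha0adj
  -- first-step equation at (i, b0)
  have heq1 := hit_eq' hH hdeg (G.ne_of_adj hb0adj)
  have hsplit1 : ∑ j ∈ G.neighborFinset i, H j b0
      = ∑ j ∈ NA, H j b0 + ∑ j ∈ NB, H j b0 :=
    (Finset.sum_filter_add_sum_filter_not _ _ _).symm
  have hNAval : ∑ j ∈ NA, H j b0 = (NA.card : ℝ) * (2 * c) := by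
    rw [Finset.sum_congr rfl (fun j hj => ?_), Finset.sum_const, nsmul_eq_mul]
    obtain ⟨hjN, hjA⟩ := Finset.mem_filter.mp hj
    have hadj : G.Adj i j := (SimpleGraph.mem_neighborFinset G i j).mp hjN
    rw [hcutA j hjA, hm j hadj, hHib0]
    ring
  have hS1 : 0 ≤ ∑ j ∈ NB, H j b0 :=
    Finset.sum_nonneg fun j _ => hit_nonneg hH hdeg b0 j
  -- first-step equation at (i, a0)
  have heq2 := hit_eq' hH hdeg (G.ne_of_adj ha0adj)
  have hsplit2 : ∑ j ∈ G.neighborFinset i, H j a0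
      = ∑ j ∈ NA, H j a0 + ∑ j ∈ NB, H j a0 :=
    (Finset.sum_filter_add_sum_filter_not _ _ _).symm
  have hNBval : ∑ j ∈ NB, H j a0 = (NB.card : ℝ) * (2 * c) := by
    rw [Finset.sum_congr rfl (fun j hj => ?_), Finset.sum_const, nsmul_eq_mul]
    obtain ⟨hjN, hjA⟩ := Finset.mem_filter.mp hj
    have hadj : G.Adj i j := (SimpleGraph.mem_neighborFinset G i j).mp hjN
    have hjB : j ∈ B := ⟨(G.ne_of_adj hadj).symm, hjA⟩
    rw [hcutB j hjB, hm j hadj, hHia0]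
    ring
  have hS2 : 0 ≤ ∑ j ∈ NA, H j a0 :=
    Finset.sum_nonneg fun j _ => hit_nonneg hH hdeg a0 j
  -- assemble the contradiction
  have hdpos : (0:ℝ) < (G.degree i : ℝ) := Nat.cast_pos.mpr (hdeg i)
  have hcard_real : (NA.card : ℝ) + (NB.card : ℝ) = (G.degree i : ℝ) := by
    exact_mod_cast congrArg (fun n : ℕ => (n : ℝ)) hcard
  rw [hHib0, hsplit1, hNAval] at heq1
  rw [hHia0, hsplit2, hNBval] at heq2
  have h2cd : (NA.card : ℝ) * (2 * c) + (NB.card : ℝ) * (2 * c)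
      = 2 * ((G.degree i : ℝ) * c) := by
    rw [← add_mul, hcard_real]; ring
  linarith [heq1, heq2, h2cd, hS1, hS2, hdpos]
end
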